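/- Let α, β > 0 be real numbers. Then for every real r, if r ≤ α·ln(1 + r) + β, then r ≤ 2α·ln(e + α) + 2β. -/

import Mathlib

set_option maxHeartbeats 1000000 in
/-- For positive reals `α, β` and every real `r`:
if `r ≤ α ln(1 + r) + β` then `r ≤ 2α ln(e + α) + 2β`. -/
theorem log_inequality_inversion' (α β : ℝ) (hα : 0 < α) (hβ : 0 < β) (r : ℝ)
    (h : r ≤ α * Real.log (1 + r) + β) :
    r ≤ 2 * α * Real.log (Real.exp 1 + α) + 2 * β := by
  set e := Real.exp 1 with he
  have he2 : (2.7182818283 : ℝ) < e := Real.exp_one_gt_d9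
  have hepos : (0:ℝ) < e := by linarith
  have heA : 0 < e + α := by linarith
  set L := Real.log (e + α) with hLdef
  have hL1 : 1 ≤ L := by
    rw [hLdef, he, Real.le_log_iff_exp_le heA]
    linarith
  set r0 : ℝ := 2 * α * L + 2 * β with hr0def
  show r ≤ r0
  by_contra hr
  push_neg at hr
  have h1 : (0:ℝ) < 1 + r0 := by nlinarith
  have h2 : (0:ℝ) < 1 + r := by nlinarith
  -- tangent line bound: log(1+r) ≤ log(1+r0) + ((1+r)/(1+r0) - 1)
  have ht : Real.log (1 + r) ≤ Real.log (1 + r0) + ((1 + r) / (1 + r0) - 1) := by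
    have hq := Real.log_le_sub_one_of_pos (div_pos h2 h1)
    rw [Real.log_div (ne_of_gt h2) (ne_of_gt h1)] at hq
    linarith
  -- bound log(1+r0)
  have ha : (0:ℝ) < 1 + 2 * α * L := by nlinarith
  have hkey : Real.log (1 + r0) ≤ 2 * L + β / α := by
    have hsplit : Real.log (1 + r0) ≤ Real.log (1 + 2 * α * L) + (2 * β) / (1 + 2 * α * L) := by
      have hq := Real.log_le_sub_one_of_pos (show 0 < (1 + r0) / (1 + 2 * α * L) from
        div_pos h1 ha)
      rw [Real.log_div (ne_of_gt h1) (ne_of_gt ha)] at hq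
      have : (1 + r0) / (1 + 2 * α * L) = 1 + (2 * β) / (1 + 2 * α * L) := by
        field_simp; ring
      rw [this] at hq
      linarith
    have hLe : L ≤ (e + α) / e := by
      have hq := Real.log_le_sub_one_of_pos (show 0 < (e + α) / e from div_pos heA hepos)
      rw [Real.log_div (ne_of_gt heA) (ne_of_gt hepos)] at hq
      have hloge : Real.log e = 1 := by rw [he]; exact Real.log_exp 1
      rw [hloge] at hq
      linarith
    have hA2 : Real.log (1 + 2 * α * L) ≤ 2 * L := by
      have hsq : Real.log ((e + α) ^ 2) = 2 * L := by
        rw [Real.log_pow]; push_cast; ring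
      rw [← hsq]
      apply Real.log_le_log ha
      have : 2 * α * L ≤ 2 * α * ((e + α) / e) :=
        mul_le_mul_of_nonneg_left hLe (by positivity)
      have hd : 2 * α * ((e + α) / e) = 2 * α + 2 * α ^ 2 / e := by field_simp
      rw [hd] at this
      have h2e : 2 * α ^ 2 / e ≤ α ^ 2 := by
        rw [div_le_iff₀ hepos]; nlinarith
      nlinarith
    have hba : (2 * β) / (1 + 2 * α * L) ≤ β / α := by
      rw [div_le_div_iff₀ ha hα]
      nlinarith [mul_nonneg (mul_nonneg hβ.le hα.le) (sub_nonneg.mpr hL1)]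
    linarith
  -- combine
  have hfrac : α * ((1 + r) / (1 + r0) - 1) ≤ (r - r0) / 2 := by
    have : (1 + r) / (1 + r0) - 1 = (r - r0) / (1 + r0) := by field_simp; ring
    rw [this, ← mul_div_assoc, div_le_div_iff₀ h1 (by norm_num : (0:ℝ) < 2)]
    have hge : 2 * α ≤ 1 + r0 := by nlinarith
    nlinarith [mul_nonneg (sub_pos.mpr hr).le (by linarith : (0:ℝ) ≤ 1 + r0 - 2 * α)]
  have hba : α * (β / α) = β := by field_simp
  have : r ≤ α * Real.log (1 + r0) + (r - r0) / 2 + β := by nlinarith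
  have : r ≤ α * (2 * L + β / α) + (r - r0) / 2 + β := by nlinarith
  rw [mul_add, hba] at this
  nlinarith
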